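/- arXiv:2305.08422 — 4 statements merged into one kernel-verified Lean document; each statement's English description precedes it below -/
import Mathlib

section
/- (Theorem 5.2, continuity of the divergence at the boundary) Let S ⊆ {1,…,N}, and let η, η' ∈ P lie in the relative interior of the face determined by S, i.e., l_r(η) = l_r(η') = 0 for r ∈ S and l_r(η) > 0, l_r(η') > 0 for r ∉ S. Then the iterated limit of the Bregman divergence exists and lim_{ξ'→η'} lim_{ξ→η} D(ξ‖ξ') = D̄(η‖η'), where both limits are taken within P° and D̄(η‖η') := (1/2)·Σ_{r∉S} ( l_r(η)·( log l_r(η) − log l_r(η') ) − ⟨η − η', ν_r⟩ ) + ⟨η' − η, ∇f(η')⟩ + f(η) − f(η'). (Equivalently: as ξ' → η' within P°, the inner limit D̄(η‖ξ') from the first step converges to D̄(η‖η'), which is the Bregman divergence of the boundary face.) -/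
open scoped InnerProductSpace
open Filter Topology

/-- **Theorem 5.2, continuity of the divergence at the boundary.**
Let `η, η'` lie in the relative interior of the face of `P` determined by `S`
(`l_r = 0` on `S`, `l_r > 0` off `S` at both points). Then the iterated limit of the
Bregman divergence exists: for each fixed `ξ' ∈ P°` the inner limit of `D(ξ‖ξ')` as
`ξ → η` within `P°` is `D̄(η‖ξ')`, and as `ξ' → η'` within `P°`, `D̄(η‖ξ')` converges
to the Bregman divergence of the boundary face
`D̄(η‖η') = (1/2)·Σ_{r∉S} ( l_r(η)(log l_r(η) − log l_r(η')) − ⟨η−η', ν_r⟩ )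
           + ⟨η'−η, ∇f(η')⟩ + f(η) − f(η')`. -/
theorem statement9 {n N : ℕ}
    (ν : Fin N → EuclideanSpace ℝ (Fin n)) (lam : Fin N → ℝ)
    (l : Fin N → EuclideanSpace ℝ (Fin n) → ℝ)
    (hl : ∀ r ξ, l r ξ = ⟪ξ, ν r⟫_ℝ + lam r)
    (f : EuclideanSpace ℝ (Fin n) → ℝ) (hf : ContDiff ℝ 1 f)
    (Pint P : Set (EuclideanSpace ℝ (Fin n)))
    (hPint : Pint = {ξ | ∀ r, 0 < l r ξ}) (hne : Pint.Nonempty)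
    (hP : P = {ξ | ∀ r, 0 ≤ l r ξ})
    (φ : EuclideanSpace ℝ (Fin n) → ℝ)
    (hφ : ∀ ξ ∈ Pint, φ ξ = (1 / 2 : ℝ) * ∑ r, l r ξ * Real.log (l r ξ) + f ξ)
    (D : EuclideanSpace ℝ (Fin n) → EuclideanSpace ℝ (Fin n) → ℝ)
    (hD : ∀ ξ ξ', D ξ ξ' = φ ξ - φ ξ' - ⟪ξ - ξ', gradient φ ξ'⟫_ℝ)
    (Dbar : EuclideanSpace ℝ (Fin n) → EuclideanSpace ℝ (Fin n) → ℝ)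
    (hDbar : ∀ ζ ξ', Dbar ζ ξ' =
      (1 / 2 : ℝ) * ∑ r, (l r ζ * (Real.log (l r ζ) - Real.log (l r ξ')) - ⟪ζ - ξ', ν r⟫_ℝ)
        + ⟪ξ' - ζ, gradient f ξ'⟫_ℝ + f ζ - f ξ')
    (S : Finset (Fin N)) (η η' : EuclideanSpace ℝ (Fin n))
    (hηS : ∀ r ∈ S, l r η = 0) (hη'S : ∀ r ∈ S, l r η' = 0)
    (hηpos : ∀ r ∉ S, 0 < l r η) (hη'pos : ∀ r ∉ S, 0 < l r η') :
    (∀ ξ' ∈ Pint, Tendsto (fun ξ => D ξ ξ') (nhdsWithin η Pint) (nhds (Dbar η ξ'))) ∧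
    Tendsto (fun ξ' => Dbar η ξ') (nhdsWithin η' Pint)
      (nhds ((1 / 2 : ℝ) *
          ∑ r ∈ Sᶜ, (l r η * (Real.log (l r η) - Real.log (l r η')) - ⟪η - η', ν r⟫_ℝ)
        + ⟪η' - η, gradient f η'⟫_ℝ + f η - f η')) := by
  classical
  -- continuity of the affine functions l r
  have hlfun : ∀ r, l r = fun ξ : EuclideanSpace ℝ (Fin n) => ⟪ξ, ν r⟫_ℝ + lam r := fun r => funext (hl r)
  have hlc : ∀ r, Continuous (l r) := by
    intro r
    rw [hlfun r]
    exact (continuous_id.inner continuous_const).add continuous_const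
  have hPintOpen : IsOpen Pint := by
    rw [hPint]
    have : {ξ : EuclideanSpace ℝ (Fin n) | ∀ r, 0 < l r ξ} = ⋂ r, (l r) ⁻¹' Set.Ioi 0 := by
      ext ξ; simp [Set.mem_iInter]
    rw [this]
    exact isOpen_iInter_of_finite fun r => isOpen_Ioi.preimage (hlc r)
  have hfd : Differentiable ℝ f := hf.differentiable one_ne_zero
  -- gradient f representation
  have hgradf : ∀ (x v : EuclideanSpace ℝ (Fin n)), fderiv ℝ f x v = ⟪v, gradient f x⟫_ℝ := by
    intro x v
    rw [real_inner_comm, ← InnerProductSpace.toDual_apply_apply]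
    simp only [gradient, LinearIsometryEquiv.apply_symm_apply]
  constructor
  · -- Part 1
    intro ξ' hξ'
    have hpos : ∀ r, 0 < l r ξ' := by rw [hPint] at hξ'; exact hξ'
    have hLr : ∀ r : Fin N, HasFDerivAt (fun ξ : EuclideanSpace ℝ (Fin n) => l r ξ * Real.log (l r ξ))
        ((Real.log (l r ξ') + 1) • (innerSL ℝ (ν r))) ξ' := by
      intro r
      have h1 : HasFDerivAt (l r) (innerSL ℝ (ν r) : EuclideanSpace ℝ (Fin n) →L[ℝ] ℝ) ξ' := by
        have heq : l r = fun ξ : EuclideanSpace ℝ (Fin n) => (innerSL ℝ (ν r)) ξ + lam r := by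
          funext ξ; rw [hl r ξ, innerSL_apply_apply, real_inner_comm]
        rw [heq]
        exact ((innerSL ℝ (ν r)).hasFDerivAt).add_const (lam r)
      have h2 := Real.hasDerivAt_mul_log (ne_of_gt (hpos r))
      exact h2.comp_hasFDerivAt ξ' h1
    set L : EuclideanSpace ℝ (Fin n) →L[ℝ] ℝ :=
      (1 / 2 : ℝ) • (∑ r, (Real.log (l r ξ') + 1) • (innerSL ℝ (ν r))) + fderiv ℝ f ξ' with hL
    have hφform : HasFDerivAt φ L ξ' := by
      have hsum : HasFDerivAt (fun ξ : EuclideanSpace ℝ (Fin n) => (1 / 2 : ℝ) * ∑ r, l r ξ * Real.log (l r ξ))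
          ((1 / 2 : ℝ) • ∑ r, (Real.log (l r ξ') + 1) • (innerSL ℝ (ν r))) ξ' :=
        (HasFDerivAt.fun_sum fun r _ => hLr r).const_mul _
      have heq : φ =ᶠ[𝓝 ξ'] fun ξ : EuclideanSpace ℝ (Fin n) => (1 / 2 : ℝ) * ∑ r, l r ξ * Real.log (l r ξ) + f ξ :=
        Filter.eventuallyEq_of_mem (hPintOpen.mem_nhds hξ') fun ξ hξ => hφ ξ hξ
      exact ((hsum.add ((hfd ξ').hasFDerivAt)).congr_of_eventuallyEq heq)
    have hkey : ∀ v : EuclideanSpace ℝ (Fin n), ⟪v, gradient φ ξ'⟫_ℝ =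
        (1 / 2 : ℝ) * ∑ r, (Real.log (l r ξ') + 1) * ⟪v, ν r⟫_ℝ + ⟪v, gradient f ξ'⟫_ℝ := by
      intro v
      have h1 : ⟪v, gradient φ ξ'⟫_ℝ = fderiv ℝ φ ξ' v := by
        rw [real_inner_comm, ← InnerProductSpace.toDual_apply_apply]
        simp only [gradient, LinearIsometryEquiv.apply_symm_apply]
      rw [h1, hφform.fderiv, hL]
      simp only [ContinuousLinearMap.add_apply, ContinuousLinearMap.coe_smul',
        Pi.smul_apply, ContinuousLinearMap.sum_apply, innerSL_apply_apply, smul_eq_mul]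
      rw [hgradf ξ' v]
      congr 1
      rw [Finset.mul_sum, Finset.mul_sum]
      refine Finset.sum_congr rfl fun r _ => ?_
      rw [real_inner_comm]
    set G : EuclideanSpace ℝ (Fin n) → ℝ := fun ξ =>
      (1 / 2 : ℝ) * ∑ r, l r ξ * Real.log (l r ξ) + f ξ - φ ξ' - ⟪ξ - ξ', gradient φ ξ'⟫_ℝ
      with hG
    have hGcont : Continuous G := by
      refine Continuous.sub (Continuous.sub (Continuous.add ?_ hf.continuous) continuous_const) ?_
      · exact continuous_const.mul
          (continuous_finset_sum _ fun r _ => Real.continuous_mul_log.comp (hlc r))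
      · exact (continuous_id.sub continuous_const).inner continuous_const
    have hinner : ∀ r, ⟪η - ξ', ν r⟫_ℝ = l r η - l r ξ' := by
      intro r
      rw [inner_sub_left, hl r η, hl r ξ']; ring
    have hGval : G η = Dbar η ξ' := by
      rw [hG]
      simp only
      rw [hDbar, hφ ξ' hξ', hkey]
      have hξη : ⟪ξ' - η, gradient f ξ'⟫_ℝ = -⟪η - ξ', gradient f ξ'⟫_ℝ := by
        rw [← inner_neg_left, neg_sub]
      rw [hξη]
      have hA : ∑ r, l r η * Real.log (l r η) - ∑ r, l r ξ' * Real.log (l r ξ')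
          - ∑ r, (Real.log (l r ξ') + 1) * ⟪η - ξ', ν r⟫_ℝ
          = ∑ r, (l r η * (Real.log (l r η) - Real.log (l r ξ')) - ⟪η - ξ', ν r⟫_ℝ) := by
        rw [← Finset.sum_sub_distrib, ← Finset.sum_sub_distrib]
        refine Finset.sum_congr rfl fun r _ => ?_
        rw [hinner r]; ring
      linarith [hA]
    have htd : Tendsto G (nhdsWithin η Pint) (nhds (Dbar η ξ')) := by
      rw [← hGval]
      exact (hGcont.tendsto η).mono_left nhdsWithin_le_nhds
    refine htd.congr' ?_
    filter_upwards [self_mem_nhdsWithin] with ξ hξ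
    rw [hG, hD, hφ ξ hξ]
  · -- Part 2
    have hgradfc : Continuous (fun x : EuclideanSpace ℝ (Fin n) => gradient f x) := by
      have h1 : Continuous (fderiv ℝ f) := hf.continuous_fderiv one_ne_zero
      exact (InnerProductSpace.toDual ℝ (EuclideanSpace ℝ (Fin n))).symm.continuous.comp h1
    have hcongr : (fun ξ' : EuclideanSpace ℝ (Fin n) => Dbar η ξ') = fun ξ' : EuclideanSpace ℝ (Fin n) =>
        (1 / 2 : ℝ) * ∑ r, (l r η * (Real.log (l r η) - Real.log (l r ξ')) - ⟪η - ξ', ν r⟫_ℝ)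
          + ⟪ξ' - η, gradient f ξ'⟫_ℝ + f η - f ξ' := funext fun ξ' => hDbar η ξ'
    rw [hcongr]
    have hsum_eq : ∑ r, (l r η * (Real.log (l r η) - Real.log (l r η')) - ⟪η - η', ν r⟫_ℝ)
        = ∑ r ∈ Sᶜ, (l r η * (Real.log (l r η) - Real.log (l r η')) - ⟪η - η', ν r⟫_ℝ) := by
      refine (Finset.sum_subset (Finset.subset_univ _) ?_).symm
      intro r _ hr
      have hrS : r ∈ S := by simpa using hr
      have h0 : l r η = 0 := hηS r hrS
      have h1 : ⟪η - η', ν r⟫_ℝ = 0 := by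
        have e1 := hl r η
        have e2 := hl r η'
        rw [inner_sub_left]
        have := hη'S r hrS
        linarith [e1, e2]
      rw [h0, h1]; ring
    rw [← hsum_eq]
    have hterm : ∀ r : Fin N, ContinuousAt
        (fun ξ' : EuclideanSpace ℝ (Fin n) => l r η * (Real.log (l r η) - Real.log (l r ξ')) - ⟪η - ξ', ν r⟫_ℝ) η' := by
      intro r
      have hinnerc : ContinuousAt (fun ξ' : EuclideanSpace ℝ (Fin n) => ⟪η - ξ', ν r⟫_ℝ) η' :=
        ((continuous_const.sub continuous_id).inner continuous_const).continuousAt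
      by_cases hr : r ∈ S
      · have h0 : l r η = 0 := hηS r hr
        simp only [h0, zero_mul]
        exact continuousAt_const.sub hinnerc
      · have hlog : ContinuousAt (fun ξ' : EuclideanSpace ℝ (Fin n) => Real.log (l r ξ')) η' :=
          (Real.continuousAt_log (ne_of_gt (hη'pos r hr))).comp (hlc r).continuousAt
        exact (continuousAt_const.mul (continuousAt_const.sub hlog)).sub hinnerc
    have hF : ContinuousAt (fun ξ' : EuclideanSpace ℝ (Fin n) =>
        (1 / 2 : ℝ) * ∑ r, (l r η * (Real.log (l r η) - Real.log (l r ξ')) - ⟪η - ξ', ν r⟫_ℝ)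
          + ⟪ξ' - η, gradient f ξ'⟫_ℝ + f η - f ξ') η' := by
      refine ContinuousAt.sub (ContinuousAt.add (ContinuousAt.add ?_ ?_) continuousAt_const)
        hf.continuous.continuousAt
      · exact continuousAt_const.mul (tendsto_finset_sum _ fun r _ => hterm r)
      · exact ((continuous_id.sub continuous_const).inner hgradfc).continuousAt
    exact hF.tendsto.mono_left nhdsWithin_le_nhds
end

section
/- (Theorem 5.5, extended Pythagorean theorem with one boundary point) Let η ∈ P and ξ, ξ' ∈ P°. If ⟨η − ξ, ∇φ(ξ') − ∇φ(ξ)⟩ = 0 (i.e., the ∇^flat-geodesic from ξ toward η and the dual-connection geodesic from ξ toward ξ' are perpendicular at ξ with respect to the Hessian metric Hess(φ)), then D̄(η‖ξ) + D(ξ‖ξ') = D̄(η‖ξ'). -/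
open scoped InnerProductSpace
open Filter Topology

/-- **Theorem 5.5, extended Pythagorean theorem with one boundary
point.** For `η ∈ P` and `ξ, ξ' ∈ P°`, if `⟨η − ξ, ∇φ(ξ') − ∇φ(ξ)⟩ = 0`
(perpendicularity at `ξ` w.r.t. the Hessian metric), then
`D̄(η‖ξ) + D(ξ‖ξ') = D̄(η‖ξ')`. -/
theorem statement11 {n N : ℕ}
    (ν : Fin N → EuclideanSpace ℝ (Fin n)) (lam : Fin N → ℝ)
    (l : Fin N → EuclideanSpace ℝ (Fin n) → ℝ)
    (hl : ∀ r ξ, l r ξ = ⟪ξ, ν r⟫_ℝ + lam r)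
    (f : EuclideanSpace ℝ (Fin n) → ℝ) (hf : ContDiff ℝ 1 f)
    (Pint P : Set (EuclideanSpace ℝ (Fin n)))
    (hPint : Pint = {ξ | ∀ r, 0 < l r ξ}) (hne : Pint.Nonempty)
    (hP : P = {ξ | ∀ r, 0 ≤ l r ξ})
    (φ : EuclideanSpace ℝ (Fin n) → ℝ)
    (hφ : ∀ ξ ∈ Pint, φ ξ = (1 / 2 : ℝ) * ∑ r, l r ξ * Real.log (l r ξ) + f ξ)
    (D : EuclideanSpace ℝ (Fin n) → EuclideanSpace ℝ (Fin n) → ℝ)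
    (hD : ∀ ξ ξ', D ξ ξ' = φ ξ - φ ξ' - ⟪ξ - ξ', gradient φ ξ'⟫_ℝ)
    (Dbar : EuclideanSpace ℝ (Fin n) → EuclideanSpace ℝ (Fin n) → ℝ)
    (hDbar : ∀ ζ ξ', Dbar ζ ξ' =
      (1 / 2 : ℝ) * ∑ r, (l r ζ * (Real.log (l r ζ) - Real.log (l r ξ')) - ⟪ζ - ξ', ν r⟫_ℝ)
        + ⟪ξ' - ζ, gradient f ξ'⟫_ℝ + f ζ - f ξ')
    (η : EuclideanSpace ℝ (Fin n)) (hη : η ∈ P)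
    (ξ : EuclideanSpace ℝ (Fin n)) (hξ : ξ ∈ Pint)
    (ξ' : EuclideanSpace ℝ (Fin n)) (hξ' : ξ' ∈ Pint)
    (horth : ⟪η - ξ, gradient φ ξ' - gradient φ ξ⟫_ℝ = 0) :
    Dbar η ξ + D ξ ξ' = Dbar η ξ' := by
  classical
  -- l as explicit functions
  have hlfun : ∀ r, l r = fun ζ => ⟪ζ, ν r⟫_ℝ + lam r := fun r => funext (hl r)
  -- Pint is open
  have hopen : IsOpen Pint := by
    rw [hPint]
    have : {ζ : EuclideanSpace ℝ (Fin n) | ∀ r, 0 < l r ζ} = ⋂ r, (l r) ⁻¹' Set.Ioi 0 := by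
      ext ζ; simp [Set.mem_iInter]
    rw [this]
    refine isOpen_iInter_of_finite fun r => (isOpen_Ioi.preimage ?_)
    rw [hlfun r]
    exact (continuous_id.inner continuous_const).add continuous_const
  -- gradient formula on Pint
  have hgrad : ∀ x ∈ Pint, gradient φ x
      = (1 / 2 : ℝ) • ∑ r, (Real.log (l r x) + 1) • ν r + gradient f x := by
    intro x hx
    have hpos : ∀ r, 0 < l r x := by rw [hPint] at hx; exact hx
    -- FDeriv of each lᵣ
    have hlr : ∀ r, HasFDerivAt (l r) (innerSL ℝ (ν r)) x := by
      intro r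
      rw [hlfun r]
      have h1 : HasFDerivAt (fun ζ : EuclideanSpace ℝ (Fin n) => ⟪ζ, ν r⟫_ℝ)
          (innerSL ℝ (ν r)) x := by
        have h0 := (innerSL ℝ (ν r)).hasFDerivAt (x := x)
        have heq : (fun ζ : EuclideanSpace ℝ (Fin n) => ⟪ζ, ν r⟫_ℝ)
            = fun ζ => innerSL ℝ (ν r) ζ := by
          funext ζ; rw [innerSL_apply_apply, real_inner_comm]
        rw [heq]; exact h0
      exact h1.add_const _
    have hterm : ∀ r, HasFDerivAt (fun ζ => l r ζ * Real.log (l r ζ))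
        ((Real.log (l r x) + 1) • innerSL ℝ (ν r)) x := by
      intro r
      have := (Real.hasDerivAt_mul_log (hpos r).ne').comp_hasFDerivAt x (hlr r)
      exact this
    have hsumF : HasFDerivAt (fun ζ => ∑ r, l r ζ * Real.log (l r ζ))
        (∑ r, (Real.log (l r x) + 1) • innerSL ℝ (ν r)) x := by
      have := HasFDerivAt.fun_sum (u := Finset.univ)
        (A := fun r ζ => l r ζ * Real.log (l r ζ))
        (A' := fun r => (Real.log (l r x) + 1) • innerSL ℝ (ν r))
        (fun r _ => hterm r)
      simpa using this
    have hfd : HasFDerivAt f (fderiv ℝ f x) x :=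
      (hf.differentiable one_ne_zero).differentiableAt.hasFDerivAt
    have hφ₀ : HasFDerivAt (fun ζ => (1 / 2 : ℝ) * ∑ r, l r ζ * Real.log (l r ζ) + f ζ)
        ((1 / 2 : ℝ) • ∑ r, (Real.log (l r x) + 1) • innerSL ℝ (ν r) + fderiv ℝ f x) x :=
      (hsumF.const_mul _).add hfd
    have hEq : φ =ᶠ[nhds x] fun ζ => (1 / 2 : ℝ) * ∑ r, l r ζ * Real.log (l r ζ) + f ζ :=
      Filter.eventuallyEq_of_mem (hopen.mem_nhds hx) (fun y hy => hφ y hy)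
    have hφF : HasFDerivAt φ
        ((1 / 2 : ℝ) • ∑ r, (Real.log (l r x) + 1) • innerSL ℝ (ν r) + fderiv ℝ f x) x :=
      hφ₀.congr_of_eventuallyEq hEq
    have hG : HasGradientAt φ
        ((1 / 2 : ℝ) • ∑ r, (Real.log (l r x) + 1) • ν r + gradient f x) x := by
      rw [hasGradientAt_iff_hasFDerivAt]
      convert hφF using 1
      · rfl
      · rfl
      apply ContinuousLinearMap.ext; intro v
      simp only [ContinuousLinearMap.add_apply, ContinuousLinearMap.smul_apply,
        ContinuousLinearMap.coe_sum', Finset.sum_apply, innerSL_apply_apply,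
        InnerProductSpace.toDual_apply_apply, inner_add_left, real_inner_smul_left, sum_inner]
      have : ⟪gradient f x, v⟫_ℝ = fderiv ℝ f x v := by
        rw [gradient, ← InnerProductSpace.toDual_apply_apply]
        simp
      rw [this]
      simp [smul_eq_mul]
    exact hG.gradient
  -- per-index inner product facts
  have hw : ∀ r : Fin N, ⟪η - ξ, ν r⟫_ℝ = l r η - l r ξ := fun r => by
    rw [inner_sub_left, hl r η, hl r ξ]; ring
  have hw' : ∀ r : Fin N, ⟪η - ξ', ν r⟫_ℝ = l r η - l r ξ' := fun r => by
    rw [inner_sub_left, hl r η, hl r ξ']; ring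
  have hu : ∀ r : Fin N, ⟪ξ - ξ', ν r⟫_ℝ = l r ξ - l r ξ' := fun r => by
    rw [inner_sub_left, hl r ξ, hl r ξ']; ring
  -- inner products with the gradient of φ
  have hinG : ∀ (v x : EuclideanSpace ℝ (Fin n)), x ∈ Pint →
      ⟪v, gradient φ x⟫_ℝ
        = (1 / 2 : ℝ) * ∑ r, (Real.log (l r x) + 1) * ⟪v, ν r⟫_ℝ
          + ⟪v, gradient f x⟫_ℝ := by
    intro v x hx
    rw [hgrad x hx, inner_add_right, real_inner_smul_right, inner_sum]
    simp only [real_inner_smul_right]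
  have hinGξ := hinG (η - ξ) ξ hξ
  have hinGξ' := hinG (η - ξ) ξ' hξ'
  have hinGD := hinG (ξ - ξ') ξ' hξ'
  rw [inner_sub_right, hinGξ, hinGξ'] at horth
  simp only [hw] at horth
  have hcomb : ∑ r, (Real.log (l r ξ') + 1) * (l r η - l r ξ)
      - ∑ r, (Real.log (l r ξ) + 1) * (l r η - l r ξ)
      = ∑ r, (Real.log (l r ξ') - Real.log (l r ξ)) * (l r η - l r ξ) := by
    rw [← Finset.sum_sub_distrib]
    exact Finset.sum_congr rfl fun r _ => by ring
  have horth' : (1 / 2 : ℝ) * ∑ r, (Real.log (l r ξ') - Real.log (l r ξ)) * (l r η - l r ξ)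
      + (⟪η - ξ, gradient f ξ'⟫_ℝ - ⟪η - ξ, gradient f ξ⟫_ℝ) = 0 := by
    linear_combination horth - (1 / 2 : ℝ) * hcomb
  -- rewrite the goal
  rw [hDbar η ξ, hDbar η ξ', hD ξ ξ', hφ ξ hξ, hφ ξ' hξ', hinGD]
  simp only [hw, hw', hu]
  have hsum : ((((∑ r, (l r η * (Real.log (l r η) - Real.log (l r ξ)) - (l r η - l r ξ)))
      + ∑ r, l r ξ * Real.log (l r ξ)) - ∑ r, l r ξ' * Real.log (l r ξ'))
      - ∑ r, (Real.log (l r ξ') + 1) * (l r ξ - l r ξ'))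
      - ∑ r, (l r η * (Real.log (l r η) - Real.log (l r ξ')) - (l r η - l r ξ'))
      = ∑ r, (Real.log (l r ξ') - Real.log (l r ξ)) * (l r η - l r ξ) := by
    rw [← Finset.sum_add_distrib, ← Finset.sum_sub_distrib, ← Finset.sum_sub_distrib,
      ← Finset.sum_sub_distrib]
    exact Finset.sum_congr rfl fun r _ => by ring
  simp only [inner_sub_left] at horth' ⊢
  linear_combination (1 / 2 : ℝ) * hsum + horth'
end

section
/- (Theorem 5.4, extended Pythagorean theorem with two boundary points) Let S ⊆ {1,…,N}, let η, η' ∈ P lie in the relative interior of the face determined by S (l_r = 0 on S and l_r > 0 off S at both points), and let ξ'' ∈ P°. Suppose the limiting orthogonality condition holds: ⟨η − ξ', ∇φ(ξ'') − ∇φ(ξ')⟩ → 0 as ξ' → η' within P° (this expresses that the limit of the tangential direction of the dual-connection geodesic from ξ'' with limit η' is perpendicular, with respect to the Hessian/Kähler metric, to the ∇^flat-geodesic from η to η'). Then D̄(η‖η') + D̄(η'‖ξ'') = D̄(η‖ξ''). -/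
open scoped InnerProductSpace
open Filter Topology

/-- **Theorem 5.4, extended Pythagorean theorem with two boundary
points.** Let `η, η'` lie in the relative interior of the face of `P` determined by
`S` and let `ξ'' ∈ P°`. If the limiting orthogonality condition
`⟨η − ξ', ∇φ(ξ'') − ∇φ(ξ')⟩ → 0` as `ξ' → η'` within `P°` holds, then
`D̄(η‖η') + D̄(η'‖ξ'') = D̄(η‖ξ'')`. Here `D̄` is given by the boundary-limit formula
with the conventions `0·log 0 = 0` (automatic since `Real.log 0 = 0`; note that for
`r ∈ S` the term `l_r(η)·(log l_r(η) − log l_r(η'))` vanishes since `l_r(η) = 0`). -/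
theorem statement12 {n N : ℕ}
    (ν : Fin N → EuclideanSpace ℝ (Fin n)) (lam : Fin N → ℝ)
    (l : Fin N → EuclideanSpace ℝ (Fin n) → ℝ)
    (hl : ∀ r ξ, l r ξ = ⟪ξ, ν r⟫_ℝ + lam r)
    (f : EuclideanSpace ℝ (Fin n) → ℝ) (hf : ContDiff ℝ 1 f)
    (Pint P : Set (EuclideanSpace ℝ (Fin n)))
    (hPint : Pint = {ξ | ∀ r, 0 < l r ξ}) (hne : Pint.Nonempty)
    (hP : P = {ξ | ∀ r, 0 ≤ l r ξ})
    (φ : EuclideanSpace ℝ (Fin n) → ℝ)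
    (hφ : ∀ ξ ∈ Pint, φ ξ = (1 / 2 : ℝ) * ∑ r, l r ξ * Real.log (l r ξ) + f ξ)
    (Dbar : EuclideanSpace ℝ (Fin n) → EuclideanSpace ℝ (Fin n) → ℝ)
    (hDbar : ∀ ζ ξ', Dbar ζ ξ' =
      (1 / 2 : ℝ) * ∑ r, (l r ζ * (Real.log (l r ζ) - Real.log (l r ξ')) - ⟪ζ - ξ', ν r⟫_ℝ)
        + ⟪ξ' - ζ, gradient f ξ'⟫_ℝ + f ζ - f ξ')
    (S : Finset (Fin N)) (η η' : EuclideanSpace ℝ (Fin n))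
    (hηS : ∀ r ∈ S, l r η = 0) (hη'S : ∀ r ∈ S, l r η' = 0)
    (hηpos : ∀ r ∉ S, 0 < l r η) (hη'pos : ∀ r ∉ S, 0 < l r η')
    (ξ'' : EuclideanSpace ℝ (Fin n)) (hξ'' : ξ'' ∈ Pint)
    (horth : Tendsto (fun ξ' => ⟪η - ξ', gradient φ ξ'' - gradient φ ξ'⟫_ℝ)
      (nhdsWithin η' Pint) (nhds 0)) :
    Dbar η η' + Dbar η' ξ'' = Dbar η ξ'' := by
  classical
  have hfd : Differentiable ℝ f := hf.differentiable one_ne_zero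
  -- continuity of the affine functions l r
  have hlcont : ∀ r, Continuous (l r) := by
    intro r
    have heq : l r = fun ξ => ⟪ξ, ν r⟫_ℝ + lam r := funext (hl r)
    rw [heq]
    exact (continuous_id.inner continuous_const).add continuous_const
  -- Pint is open
  have hPintOpen : IsOpen Pint := by
    rw [hPint]
    have : {ξ : EuclideanSpace ℝ (Fin n) | ∀ r, 0 < l r ξ} = ⋂ r, {ξ | 0 < l r ξ} := by
      ext ξ; simp
    rw [this]
    exact isOpen_iInter_of_finite fun r => isOpen_lt continuous_const (hlcont r)
  -- inner product with ν r of differences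
  have hdiff : ∀ (r : Fin N) (a b : EuclideanSpace ℝ (Fin n)),
      ⟪a - b, ν r⟫_ℝ = l r a - l r b := by
    intro r a b
    rw [inner_sub_left, hl, hl]; ring
  -- gradient of φ on Pint
  have hgradφ : ∀ x, x ∈ Pint → gradient φ x =
      (1/2 : ℝ) • ∑ r, (Real.log (l r x) + 1) • ν r + gradient f x := by
    intro x hxmem
    have hx : ∀ r, 0 < l r x := by rw [hPint] at hxmem; exact hxmem
    have hEq : φ =ᶠ[𝓝 x]
        (fun ξ => (1 / 2 : ℝ) * ∑ r, l r ξ * Real.log (l r ξ) + f ξ) := by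
      filter_upwards [hPintOpen.mem_nhds hxmem] with ξ hξ using hφ ξ hξ
    rw [hEq.gradient_eq]
    refine HasGradientAt.gradient ?_
    rw [hasGradientAt_iff_hasFDerivAt]
    have hsum : HasFDerivAt
        (fun ξ => (1 / 2 : ℝ) * ∑ r, l r ξ * Real.log (l r ξ) + f ξ)
        ((1/2 : ℝ) • ∑ r, (Real.log (l r x) + 1) • (innerSL ℝ (ν r)) + fderiv ℝ f x) x := by
      refine HasFDerivAt.add ?_ (hfd x).hasFDerivAt
      refine HasFDerivAt.const_mul ?_ _
      refine HasFDerivAt.fun_sum fun r _ => ?_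
      have hlr : HasFDerivAt (l r) (innerSL ℝ (ν r)) x := by
        have heq : l r = fun ξ => (innerSL ℝ (ν r)) ξ + lam r := by
          funext ξ
          rw [hl]
          simp only [innerSL_apply_apply]
          rw [real_inner_comm]
        rw [heq]
        exact ((innerSL ℝ (ν r)).hasFDerivAt (x := x)).add_const (lam r)
      have hmul : HasDerivAt (fun t : ℝ => t * Real.log t)
          (Real.log (l r x) + 1) (l r x) := by
        have h := (hasDerivAt_id (l r x)).mul (Real.hasDerivAt_log (ne_of_gt (hx r)))
        refine h.congr_deriv ?_
        simp [mul_inv_cancel₀ (ne_of_gt (hx r))]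
      exact hmul.comp_hasFDerivAt x hlr
    have hdual : (InnerProductSpace.toDual ℝ (EuclideanSpace ℝ (Fin n)))
        ((1/2 : ℝ) • ∑ r, (Real.log (l r x) + 1) • ν r + gradient f x)
        = (1/2 : ℝ) • ∑ r, (Real.log (l r x) + 1) • (innerSL ℝ (ν r)) + fderiv ℝ f x := by
      apply ContinuousLinearMap.ext; intro w
      have hg : (InnerProductSpace.toDual ℝ (EuclideanSpace ℝ (Fin n))) (gradient f x)
          = fderiv ℝ f x := by simp [gradient]
      rw [← hg]
      simp [InnerProductSpace.toDual_apply_apply, inner_add_left, real_inner_smul_left, sum_inner,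
        ContinuousLinearMap.sum_apply]
    rw [hdual]
    exact hsum
  -- inner products with the gradient of φ
  have hip : ∀ (w x : EuclideanSpace ℝ (Fin n)), x ∈ Pint →
      ⟪w, gradient φ x⟫_ℝ = (1/2 : ℝ) * ∑ r, (Real.log (l r x) + 1) * ⟪w, ν r⟫_ℝ
        + ⟪w, gradient f x⟫_ℝ := by
    intro w x hx
    rw [hgradφ x hx]
    rw [inner_add_right, real_inner_smul_right, inner_sum]
    simp only [real_inner_smul_right]
  -- the auxiliary function F and its limit E
  set F : EuclideanSpace ℝ (Fin n) → ℝ := fun ξ' =>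
    (1/2 : ℝ) * ∑ r, (Real.log (l r ξ'') * ⟪η - ξ', ν r⟫_ℝ
      - (Real.log (l r ξ') * l r η - l r ξ' * Real.log (l r ξ')))
    + ⟪η - ξ', gradient f ξ'' - gradient f ξ'⟫_ℝ with hF
  set E : ℝ :=
    (1/2 : ℝ) * ∑ r, (Real.log (l r ξ'') * ⟪η - η', ν r⟫_ℝ
      - (Real.log (l r η') * l r η - l r η' * Real.log (l r η')))
    + ⟪η - η', gradient f ξ'' - gradient f η'⟫_ℝ with hE
  -- the orthogonality function coincides with F on Pint
  have hcongr : (fun ξ' => ⟪η - ξ', gradient φ ξ'' - gradient φ ξ'⟫_ℝ)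
      =ᶠ[𝓝[Pint] η'] F := by
    filter_upwards [eventually_mem_nhdsWithin] with ξ' hξ'
    rw [inner_sub_right, hip (η - ξ') ξ'' hξ'', hip (η - ξ') ξ' hξ']
    have hper : ∀ r : Fin N,
        (Real.log (l r ξ'') + 1) * ⟪η - ξ', ν r⟫_ℝ
          - (Real.log (l r ξ') + 1) * ⟪η - ξ', ν r⟫_ℝ
        = Real.log (l r ξ'') * ⟪η - ξ', ν r⟫_ℝ
          - (Real.log (l r ξ') * l r η - l r ξ' * Real.log (l r ξ')) := by
      intro r
      rw [hdiff r η ξ']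
      ring
    have hsums : (∑ r, (Real.log (l r ξ'') + 1) * ⟪η - ξ', ν r⟫_ℝ)
        - (∑ r, (Real.log (l r ξ') + 1) * ⟪η - ξ', ν r⟫_ℝ)
        = ∑ r, (Real.log (l r ξ'') * ⟪η - ξ', ν r⟫_ℝ
          - (Real.log (l r ξ') * l r η - l r ξ' * Real.log (l r ξ'))) := by
      rw [← Finset.sum_sub_distrib]
      exact Finset.sum_congr rfl fun r _ => hper r
    have hinner : ⟪η - ξ', gradient f ξ'' - gradient f ξ'⟫_ℝ
        = ⟪η - ξ', gradient f ξ''⟫_ℝ - ⟪η - ξ', gradient f ξ'⟫_ℝ := inner_sub_right _ _ _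
    simp only [hF]
    linarith [hsums, hinner]
  -- F tends to E at η'
  have hgfcont : Continuous (gradient f) := by
    have h1 : Continuous (fderiv ℝ f) := hf.continuous_fderiv one_ne_zero
    exact (InnerProductSpace.toDual ℝ _).symm.continuous.comp h1
  have hFtendsto : Tendsto F (𝓝 η') (𝓝 E) := by
    rw [hF, hE]
    refine Tendsto.add (Tendsto.const_mul _ ?_) ?_
    · refine tendsto_finset_sum _ fun r _ => ?_
      refine Tendsto.sub ?_ (Tendsto.sub ?_ ?_)
      · exact (continuous_const.mul
          ((continuous_const.sub continuous_id).inner continuous_const)).tendsto η'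
      · by_cases hr : r ∈ S
        · simp only [hηS r hr, mul_zero]
          exact tendsto_const_nhds
        · exact (((Real.continuousAt_log (ne_of_gt (hη'pos r hr))).comp
            (hlcont r).continuousAt).mul continuousAt_const)
      · exact (Real.continuous_mul_log.comp (hlcont r)).tendsto η'
    · exact ((continuous_const.sub continuous_id).inner
        (continuous_const.sub hgfcont)).tendsto η'
  -- η' is in the closure of Pint, hence the within-filter is nontrivial
  have hcl : η' ∈ closure Pint := by
    obtain ⟨ξ0, hξ0mem⟩ := hne
    have hξ0 : ∀ r, 0 < l r ξ0 := by rw [hPint] at hξ0mem; exact hξ0mem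
    have hη'0 : ∀ r, 0 ≤ l r η' := by
      intro r
      by_cases hr : r ∈ S
      · exact le_of_eq (hη'S r hr).symm
      · exact (hη'pos r hr).le
    have hmem : ∀ k : ℕ, η' + ((k : ℝ) + 1)⁻¹ • (ξ0 - η') ∈ Pint := by
      intro k
      rw [hPint]
      intro r
      have hc0 : (0:ℝ) < ((k:ℝ)+1)⁻¹ := by positivity
      have hc1 : ((k:ℝ)+1)⁻¹ ≤ 1 := by
        rw [inv_le_one_iff₀]
        right; linarith [Nat.cast_nonneg (α := ℝ) k]
      have hval : l r (η' + ((k:ℝ)+1)⁻¹ • (ξ0 - η'))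
          = l r η' + ((k:ℝ)+1)⁻¹ * (l r ξ0 - l r η') := by
        simp only [hl]
        rw [inner_add_left, real_inner_smul_left, inner_sub_left]
        ring
      rw [hval]
      nlinarith [mul_nonneg (sub_nonneg.mpr hc1) (hη'0 r),
        mul_pos hc0 (hξ0 r)]
    have h0 : Tendsto (fun k : ℕ => ((k : ℝ) + 1)⁻¹) atTop (𝓝 0) := by
      have := tendsto_one_div_add_atTop_nhds_zero_nat (𝕜 := ℝ)
      simpa [one_div] using this
    have htend : Tendsto (fun k : ℕ => η' + ((k : ℝ) + 1)⁻¹ • (ξ0 - η')) atTop (𝓝 η') := by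
      have := (h0.smul_const (ξ0 - η')).const_add η'
      simpa using this
    exact mem_closure_of_tendsto htend (Eventually.of_forall hmem)
  haveI : (𝓝[Pint] η').NeBot := mem_closure_iff_nhdsWithin_neBot.mp hcl
  -- E = 0 by uniqueness of limits
  have hE0 : E = 0 := by
    have h1 : Tendsto F (𝓝[Pint] η') (𝓝 E) := hFtendsto.mono_left nhdsWithin_le_nhds
    have h2 : Tendsto F (𝓝[Pint] η') (𝓝 0) := by
      rwa [tendsto_congr' hcongr] at horth
    exact tendsto_nhds_unique h1 h2
  -- algebraic identity
  have hkey : ∀ r : Fin N,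
      (l r η * (Real.log (l r η) - Real.log (l r η')) - ⟪η - η', ν r⟫_ℝ)
      + (l r η' * (Real.log (l r η') - Real.log (l r ξ'')) - ⟪η' - ξ'', ν r⟫_ℝ)
      - (l r η * (Real.log (l r η) - Real.log (l r ξ'')) - ⟪η - ξ'', ν r⟫_ℝ)
      = Real.log (l r ξ'') * ⟪η - η', ν r⟫_ℝ
        - (Real.log (l r η') * l r η - l r η' * Real.log (l r η')) := by
    intro r
    rw [hdiff r η η', hdiff r η' ξ'', hdiff r η ξ'']
    ring
  have hsums2 : (∑ r, (l r η * (Real.log (l r η) - Real.log (l r η')) - ⟪η - η', ν r⟫_ℝ))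
      + (∑ r, (l r η' * (Real.log (l r η') - Real.log (l r ξ'')) - ⟪η' - ξ'', ν r⟫_ℝ))
      - (∑ r, (l r η * (Real.log (l r η) - Real.log (l r ξ'')) - ⟪η - ξ'', ν r⟫_ℝ))
      = ∑ r, (Real.log (l r ξ'') * ⟪η - η', ν r⟫_ℝ
        - (Real.log (l r η') * l r η - l r η' * Real.log (l r η'))) := by
    rw [← Finset.sum_add_distrib, ← Finset.sum_sub_distrib]
    exact Finset.sum_congr rfl fun r _ => hkey r
  have hfterm : ⟪η' - η, gradient f η'⟫_ℝ + ⟪ξ'' - η', gradient f ξ''⟫_ℝ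
      - ⟪ξ'' - η, gradient f ξ''⟫_ℝ
      = ⟪η - η', gradient f ξ'' - gradient f η'⟫_ℝ := by
    simp only [inner_sub_left, inner_sub_right]
    ring
  rw [hDbar, hDbar, hDbar]
  rw [hE] at hE0
  linarith [hsums2, hfterm, hE0]
end

section
/- (Limit of the divergence along a geodesic approaching the boundary, Section 6.1) Let a, b > 0 with a + b < 1 and v > 0. Set ξ := (a, b) and γ(t) := ( a·e^{t v} / (1 + (a+b)·e^{t v}), b·e^{t v} / (1 + (a+b)·e^{t v}) ). Then D_P(γ(t) ‖ ξ) → −log(a + b) as t → ∞, where D_P(x ‖ x') := x₁·log(x₁/x₁') + x₂·log(x₂/x₂') + (1 − x₁ − x₂)·log( (1 − x₁ − x₂) / (1 − x₁' − x₂') ). -/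
open Filter Topology Real

/-- **limit of the divergence along a geodesic approaching the boundary,
Section 6.1.** For `a, b > 0` with `a + b < 1`, `v > 0`, `ξ = (a,b)` and
`γ(t) = ( a·e^{tv}/(1+(a+b)e^{tv}), b·e^{tv}/(1+(a+b)e^{tv}) )`, the Kullback–Leibler
(Bregman) divergence `D_P(γ(t)‖ξ)` tends to `−log(a+b)` as `t → ∞`, where
`D_P(x‖x') = x₁ log(x₁/x₁') + x₂ log(x₂/x₂') + (1−x₁−x₂) log((1−x₁−x₂)/(1−x₁'−x₂'))`. -/
theorem statement14 (a b v : ℝ) (ha : 0 < a) (hb : 0 < b) (hab : a + b < 1)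
    (hv : 0 < v)
    (γ : ℝ → ℝ × ℝ)
    (hγ : ∀ t, γ t =
      (a * Real.exp (t * v) / (1 + (a + b) * Real.exp (t * v)),
       b * Real.exp (t * v) / (1 + (a + b) * Real.exp (t * v))))
    (DP : ℝ × ℝ → ℝ × ℝ → ℝ)
    (hDP : ∀ x x', DP x x' =
      x.1 * Real.log (x.1 / x'.1) + x.2 * Real.log (x.2 / x'.2) +
        (1 - x.1 - x.2) * Real.log ((1 - x.1 - x.2) / (1 - x'.1 - x'.2))) :
    Tendsto (fun t => DP (γ t) (a, b)) atTop (nhds (-Real.log (a + b))) := by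
  set s := a + b with hs
  have hs0 : 0 < s := by positivity
  have hs1 : (0:ℝ) < 1 - s := by linarith
  -- abbreviations
  set E : ℝ → ℝ := fun t => Real.exp (t * v) with hE
  have hEpos : ∀ t, 0 < E t := fun t => Real.exp_pos _
  have hQpos : ∀ t, 0 < 1 + s * E t := fun t => by nlinarith [hEpos t]
  -- rewrite the function
  have key : ∀ t, DP (γ t) (a, b) =
      s * (E t / (1 + s * E t)) * Real.log (E t / (1 + s * E t))
        - Real.log (1 + s * E t) / (1 + s * E t)
        - Real.log (1 - s) / (1 + s * E t) := by
    intro t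
    have hQ := hQpos t
    have hQne : (1 + s * E t) ≠ 0 := ne_of_gt hQ
    rw [hDP, hγ]
    rw [show Real.exp (t * v) = E t from rfl]
    have h1 : a * E t / (1 + s * E t) / a = E t / (1 + s * E t) := by
      field_simp
    have h2 : b * E t / (1 + s * E t) / b = E t / (1 + s * E t) := by
      field_simp
    have h3 : 1 - a * E t / (1 + s * E t) - b * E t / (1 + s * E t)
        = 1 / (1 + s * E t) := by
      have hh := mul_inv_cancel₀ hQne
      rw [hs] at hh ⊢
      linear_combination -hh
    simp only [h3]
    rw [h1, h2]
    have h4 : Real.log (1 / (1 + s * E t) / (1 - a - b)) =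
        - Real.log (1 + s * E t) - Real.log (1 - s) := by
      rw [Real.log_div (by positivity) (by rw [hs] at hs1; linarith),
        Real.log_div one_ne_zero hQne, Real.log_one]
      ring_nf
      rw [show (1:ℝ) - a - b = 1 - s by rw [hs]; ring]
    rw [h4]
    rw [hs]
    ring
  simp only [key]
  -- limits
  have hEtop : Tendsto E atTop atTop :=
    Real.tendsto_exp_atTop.comp (tendsto_id.atTop_mul_const hv)
  have hQtop : Tendsto (fun t => 1 + s * E t) atTop atTop := by
    apply tendsto_atTop_add_const_left
    exact (hEtop.const_mul_atTop hs0)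
  have hratio : Tendsto (fun t => E t / (1 + s * E t)) atTop (nhds (1/s)) := by
    have : Tendsto (fun t => 1 / (1 / E t + s)) atTop (nhds (1 / (0 + s))) := by
      apply Tendsto.div tendsto_const_nhds
      · exact Tendsto.add_const s (hEtop.inv_tendsto_atTop.congr (by intro t; simp))
      · simpa using ne_of_gt hs0
    rw [zero_add] at this
    refine this.congr (fun t => ?_)
    rw [div_add' _ _ _ (ne_of_gt (hEpos t)), one_div_div, mul_comm]
  have hlog : Tendsto (fun t => Real.log (E t / (1 + s * E t))) atTop
      (nhds (Real.log (1/s))) :=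
    (Real.continuousAt_log (by positivity)).tendsto.comp hratio
  have hinvQ : Tendsto (fun t => 1 / (1 + s * E t)) atTop (nhds 0) := by
    exact hQtop.inv_tendsto_atTop.congr (fun t => by simp [one_div])
  have hlogQ : Tendsto (fun t => Real.log (1 + s * E t) / (1 + s * E t)) atTop
      (nhds 0) := by
    have base : Tendsto (fun x : ℝ => Real.log x / x) atTop (nhds 0) := by
      have := Real.tendsto_pow_log_div_mul_add_atTop 1 0 1 one_ne_zero
      simpa using this
    exact base.comp hQtop
  have hconst : Tendsto (fun t => Real.log (1 - s) / (1 + s * E t)) atTop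
      (nhds 0) := by
    have := hinvQ.const_mul (Real.log (1 - s))
    simpa [mul_one_div, div_eq_mul_inv] using this
  have hmain : Tendsto (fun t => s * (E t / (1 + s * E t)) *
      Real.log (E t / (1 + s * E t))) atTop (nhds (Real.log (1/s))) := by
    have h := ((hratio.const_mul s).mul hlog)
    have he : s * (1/s) * Real.log (1/s) = Real.log (1/s) := by
      rw [mul_one_div, div_self (ne_of_gt hs0), one_mul]
    rw [he] at h
    exact h
  have final := (hmain.sub hlogQ).sub hconst
  have : Real.log (1/s) - 0 - 0 = -Real.log s := by
    rw [Real.log_div one_ne_zero (ne_of_gt hs0), Real.log_one]; ring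
  rwa [this] at final
end
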